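/- For every free economy with egalitarian Shapley payoffs, there exists α_0 ∈ (0,1) such that for all α ∈ [0, α_0], the game with payoffs ES^α admits a pure strategy Nash equilibrium that is Pareto-efficient (in fact, an equilibrium at which f attains its maximum). -/

import Mathlib

open Finset

noncomputable section

variable {ι : Type*}

/-- Sub-profile of `x` relative to the reference profile `o`:
agents in `S` play their `x`-coordinate, all others play their reference action. -/
def subp [DecidableEq ι] {X : ι → Type*} (o x : ∀ i, X i) (S : Finset ι) : ∀ i, X i :=
  fun j => if j ∈ S then x j else o j

/-- The set of active agents at profile `x` (those deviating from the reference `o`). -/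
def active [DecidableEq ι] [Fintype ι] {X : ι → Type*} [∀ i, DecidableEq (X i)]
    (o x : ∀ i, X i) : Finset ι :=
  Finset.univ.filter fun j => x j ≠ o j

/-- The multivariate Shapley pay scheme. -/
def Sh [DecidableEq ι] [Fintype ι] {X : ι → Type*} [∀ i, DecidableEq (X i)]
    (o : ∀ i, X i) (f : (∀ i, X i) → ℝ) (i : ι) (x : ∀ i, X i) : ℝ :=
  ∑ S ∈ ((active o x).erase i).powerset,
    ((S.card.factorial * ((active o x).card - S.card - 1).factorial : ℝ) /
        ((active o x).card.factorial)) *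
      (f (subp o x (insert i S)) - f (subp o x S))

end

noncomputable section

/-- The egalitarian Shapley pay scheme with meritocratic weight `α`. -/
def ES {ι : Type*} [DecidableEq ι] [Fintype ι] {X : ι → Type*} [∀ i, DecidableEq (X i)]
    (α : ℝ) (o : ∀ i, X i) (f : (∀ i, X i) → ℝ) (i : ι) (x : ∀ i, X i) : ℝ :=
  α * Sh o f i x + (1 - α) * f x / (Fintype.card ι)

end

set_option linter.unusedSectionVars false

noncomputable section
variable {ι : Type*} [DecidableEq ι] [Fintype ι] {X : ι → Type*} [∀ i, DecidableEq (X i)]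
variable (o x : ∀ i, X i) (f : (∀ i, X i) → ℝ)

def coef (s a : ℕ) : ℝ :=
  if s = 0 then 0 else ((s-1).factorial * (a-s).factorial : ℝ) / a.factorial

def Pot (o : ∀ i, X i) (f : (∀ i, X i) → ℝ) (x : ∀ i, X i) : ℝ :=
  ∑ S ∈ (active o x).powerset, coef S.card (active o x).card * f (subp o x S)

lemma subp_empty : subp o x ∅ = o := by funext j; simp [subp]

lemma subp_active : subp o x (active o x) = x := by
  funext j
  by_cases h : x j = o j <;> simp [subp, active, h]

lemma active_update (i : ι) :
    active o (Function.update x i (o i)) = (active o x).erase i := by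
  ext j
  by_cases h : j = i
  · subst h; simp [active, Function.update]
  · simp [active, Function.update, h]

lemma subp_update (i : ι) {S : Finset ι} (hS : i ∉ S) :
    subp o (Function.update x i (o i)) S = subp o x S := by
  funext j
  by_cases hj : j = i
  · subst hj; simp [subp, hS]
  · simp [subp, Function.update, hj]

lemma subp_insert_of_eq {i : ι} (h : x i = o i) (S : Finset ι) :
    subp o x (insert i S) = subp o x S := by
  funext j
  by_cases hj : j = i
  · subst hj; by_cases hS : j ∈ S <;> simp [subp, hS, h]
  · simp [subp, hj]

lemma coef_succ (s a : ℕ) : coef (s+1) a = (s.factorial * (a - s - 1).factorial : ℝ) / a.factorial := by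
  simp [coef, Nat.sub_sub]

lemma coef_diff {s b : ℕ} (hs : 1 ≤ s) (hsb : s ≤ b) :
    coef s (b+1) - coef s b = -(coef (s+1) (b+1)) := by
  obtain ⟨t, rfl⟩ := Nat.exists_eq_add_of_le hs
  obtain ⟨u, hu⟩ := Nat.exists_eq_add_of_le hsb
  have hb : b = t + 1 + u := by omega
  subst hb
  simp only [coef_succ, coef, Nat.add_sub_cancel]
  have h1 : (1 + t : ℕ) - 1 = t := by omega
  have h2 : (t + 1 + u + 1) - (1 + t) = u + 1 := by omega
  have h3 : (t + 1 + u) - (1 + t) = u := by omega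
  have h5 : (1 + t : ℕ) ≠ 0 := by omega
  have h6 : (1 + t + 1 : ℕ) ≠ 0 := by omega
  have h7 : (1 + t + 1 : ℕ) - 1 = 1 + t := by omega
  have h8 : (t + 1 + u + 1) - (1 + t + 1) = u := by omega
  rw [if_neg h5, if_neg h5, if_neg h6]
  simp only [h1, h2, h3, h7, h8]
  have e1 : ((t + 1 + u + 1).factorial : ℝ) = (t + 1 + u + 1) * (t+1+u).factorial := by
    push_cast [Nat.factorial_succ]; ring
  have e2 : ((u + 1).factorial : ℝ) = (u+1) * u.factorial := by
    push_cast [Nat.factorial_succ]; ring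
  have e3 : ((1 + t).factorial : ℝ) = (1+t) * t.factorial := by
    rw [add_comm 1 t]; push_cast [Nat.factorial_succ]; ring
  have p1 : ((t+1+u).factorial : ℝ) ≠ 0 := by positivity
  have p2 : (u.factorial : ℝ) ≠ 0 := by positivity
  have p3 : ((t:ℝ) + 1 + u + 1) ≠ 0 := by positivity
  rw [e1, e2, e3]
  field_simp
  ring

lemma Sh_eq_zero {i : ι} (hi : x i = o i) : Sh o f i x = 0 := by
  apply Finset.sum_eq_zero
  intro S _
  rw [subp_insert_of_eq o x hi, sub_self, mul_zero]

lemma Sh_eq_pot (hf : f o = 0) (i : ι) :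
    Sh o f i x = Pot o f x - Pot o f (Function.update x i (o i)) := by
  by_cases hi : x i = o i
  · have hx : Function.update x i (o i) = x := by rw [← hi]; exact Function.update_eq_self i x
    rw [hx, sub_self, Sh_eq_zero o x f hi]
  · set A := active o x with hA
    have hiA : i ∈ A := by simp [hA, active, hi]
    set B := A.erase i with hB
    have hiB : i ∉ B := Finset.notMem_erase _ _
    have hAB : insert i B = A := Finset.insert_erase hiA
    have hcard : A.card = B.card + 1 := by
      rw [← hAB, Finset.card_insert_of_notMem hiB]
    have hact' : active o (Function.update x i (o i)) = B := active_update o x i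
    have hPx' : Pot o f (Function.update x i (o i))
        = ∑ S ∈ B.powerset, coef S.card B.card * f (subp o x S) := by
      rw [Pot, hact']
      refine Finset.sum_congr rfl fun S hS => ?_
      rw [subp_update o x i fun h => hiB (Finset.mem_powerset.1 hS h)]
    have hPx : Pot o f x
        = (∑ S ∈ B.powerset, coef S.card A.card * f (subp o x S))
          + ∑ S ∈ B.powerset, coef (S.card + 1) A.card * f (subp o x (insert i S)) := by
      rw [Pot, ← hA, ← hAB, Finset.sum_powerset_insert hiB]
      congr 1
      refine Finset.sum_congr rfl fun S hS => ?_
      rw [Finset.card_insert_of_notMem fun h => hiB (Finset.mem_powerset.1 hS h), hAB]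
    rw [hPx, hPx', Sh, ← hA, ← hB, add_sub_assoc, ← Finset.sum_sub_distrib, ← Finset.sum_add_distrib]
    refine Finset.sum_congr rfl fun S hS => ?_
    have hiS : i ∉ S := fun h => hiB (Finset.mem_powerset.1 hS h)
    have hsb : S.card ≤ B.card := Finset.card_le_card (Finset.mem_powerset.1 hS)
    have hw : ((S.card.factorial : ℝ) * ((A.card - S.card - 1).factorial : ℝ)) / (A.card.factorial : ℝ)
        = coef (S.card + 1) A.card := (coef_succ _ _).symm
    rw [hw]
    by_cases h0 : S.card = 0
    · have hS0 : S = ∅ := Finset.card_eq_zero.1 h0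
      subst hS0
      rw [subp_empty, hf]
      simp [coef]
    · have hdiff : coef S.card A.card = coef S.card B.card - coef (S.card + 1) A.card := by
        have := coef_diff (s := S.card) (b := B.card) (Nat.one_le_iff_ne_zero.2 h0) hsb
        rw [hcard]
        linarith [this]
      rw [hdiff]
      ring

lemma coef_aux {s a : ℕ} (hsa : s < a) :
    (a : ℝ) * coef s a - ((a - s : ℕ) : ℝ) * coef s (a - 1) = 0 := by
  by_cases h0 : s = 0
  · subst h0; simp [coef]
  · obtain ⟨t, rfl⟩ := Nat.exists_eq_add_of_le (Nat.one_le_iff_ne_zero.2 h0)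
    obtain ⟨u, rfl⟩ := Nat.exists_eq_add_of_lt hsa
    simp only [coef]
    have h5 : (1 + t : ℕ) ≠ 0 := by omega
    have h1 : (1 + t : ℕ) - 1 = t := by omega
    have h2 : (1 + t + u + 1) - (1 + t) = u + 1 := by omega
    have h3 : (1 + t + u + 1) - 1 = 1 + t + u := by omega
    have h4 : (1 + t + u) - (1 + t) = u := by omega
    rw [if_neg h5, if_neg h5, h1, h2, h3, h4]
    have e1 : ((1 + t + u + 1).factorial : ℝ) = (1 + t + u + 1) * (1 + t + u).factorial := by
      push_cast [Nat.factorial_succ]; ring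
    have e2 : ((u + 1).factorial : ℝ) = (u + 1) * u.factorial := by
      push_cast [Nat.factorial_succ]; ring
    have p1 : ((1 + t + u).factorial : ℝ) ≠ 0 := by positivity
    rw [e1, e2]
    push_cast
    field_simp
    ring

lemma coef_self {a : ℕ} (ha : 1 ≤ a) : (a : ℝ) * coef a a = 1 := by
  obtain ⟨t, rfl⟩ := Nat.exists_eq_add_of_le ha
  simp only [coef]
  have h5 : (1 + t : ℕ) ≠ 0 := by omega
  have h1 : (1 + t : ℕ) - 1 = t := by omega
  rw [if_neg h5, h1, Nat.sub_self]
  have e1 : ((1 + t).factorial : ℝ) = (1 + t) * t.factorial := by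
    rw [add_comm 1 t]; push_cast [Nat.factorial_succ]; ring
  have p1 : ((t).factorial : ℝ) ≠ 0 := by positivity
  rw [e1]
  push_cast
  field_simp
  simp

lemma sh_efficiency (hf : f o = 0) : ∑ i, Sh o f i x = f x := by
  classical
  set A := active o x with hA
  by_cases hA0 : A = ∅
  · have hxo : x = o := by
      funext j
      by_contra h
      have : j ∈ A := by simp [hA, active, h]
      simp [hA0] at this
    rw [hxo, hf]
    exact Finset.sum_eq_zero fun i _ => Sh_eq_zero o o f rfl
  · have ha1 : 1 ≤ A.card := Nat.one_le_iff_ne_zero.2 (by simpa using hA0)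
    have hstep1 : ∑ i, Sh o f i x = ∑ i ∈ A, Sh o f i x := by
      refine (Finset.sum_subset (Finset.subset_univ A) fun i _ hi => ?_).symm
      have : x i = o i := by simpa [hA, active] using hi
      exact Sh_eq_zero o x f this
    have hstep2 : ∀ i ∈ A, Sh o f i x
        = Pot o f x - ∑ S ∈ A.powerset.filter (fun S => i ∉ S),
            coef S.card (A.card - 1) * f (subp o x S) := by
      intro i hi
      rw [Sh_eq_pot o x f hf i]
      congr 1
      rw [Pot, active_update o x i, ← hA]
      have hpe : (A.erase i).powerset = A.powerset.filter (fun S => i ∉ S) := by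
        ext S
        simp [Finset.subset_erase, and_comm]
      have hce : (A.erase i).card = A.card - 1 := by
        rw [Finset.card_erase_of_mem hi]
      rw [hce, hpe]
      refine Finset.sum_congr rfl fun S hS => ?_
      have hiS : i ∉ S := (Finset.mem_filter.1 hS).2
      rw [subp_update o x i hiS]
    have hswap : ∑ i ∈ A, ∑ S ∈ A.powerset.filter (fun S => i ∉ S),
          coef S.card (A.card - 1) * f (subp o x S)
        = ∑ S ∈ A.powerset, ((A.card - S.card : ℕ) : ℝ) *
            (coef S.card (A.card - 1) * f (subp o x S)) := by
      simp only [Finset.sum_filter]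
      rw [Finset.sum_comm]
      refine Finset.sum_congr rfl fun S hS => ?_
      rw [← Finset.sum_filter, ← Finset.sdiff_eq_filter, Finset.sum_const,
        Finset.card_sdiff_of_subset (Finset.mem_powerset.1 hS), nsmul_eq_mul]
    rw [hstep1, Finset.sum_congr rfl hstep2, Finset.sum_sub_distrib, Finset.sum_const,
      hswap, nsmul_eq_mul, Pot, ← hA, Finset.mul_sum, ← Finset.sum_sub_distrib]
    rw [Finset.sum_eq_single_of_mem A (Finset.mem_powerset_self A)]
    · have : f (subp o x A) = f x := by rw [hA, subp_active]
      rw [this, Nat.sub_self, Nat.cast_zero, zero_mul, sub_zero, ← mul_assoc, coef_self ha1, one_mul]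
    · intro S hS hSA
      have hlt : S.card < A.card :=
        Finset.card_lt_card (lt_of_le_of_ne (Finset.mem_powerset.1 hS) hSA)
      have h := coef_aux (a := A.card) (s := S.card) hlt
      linear_combination f (subp o x S) * h

theorem stmt_10' {ι : Type*} [DecidableEq ι] [Fintype ι] {X : ι → Type*}
    [∀ i, Fintype (X i)] [∀ i, DecidableEq (X i)]
    (o : ∀ i, X i) (f : (∀ i, X i) → ℝ) (hf : f o = 0) :
    ∃ α₀ : ℝ, 0 < α₀ ∧ α₀ < 1 ∧ ∀ α : ℝ, 0 ≤ α → α ≤ α₀ →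
      ∃ xs : ∀ i, X i,
        (∀ i : ι, ∀ y : X i, ES α o f i (Function.update xs i y) ≤ ES α o f i xs) ∧
        (∀ y : ∀ i, X i, f y ≤ f xs) ∧
        ¬ ∃ y : ∀ i, X i, (∀ j : ι, ES α o f j xs ≤ ES α o f j y) ∧
          ∃ j : ι, ES α o f j xs < ES α o f j y := by
  classical
  rcases isEmpty_or_nonempty ι with hι | hι
  · refine ⟨1/2, by norm_num, by norm_num, fun α h0 h1 => ⟨o, ?_, ?_, ?_⟩⟩
    · intro i; exact isEmptyElim i
    · intro y
      have : y = o := funext fun i => isEmptyElim i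
      rw [this]
    · rintro ⟨y, _, j, _⟩; exact isEmptyElim j
  · haveI : Nonempty (∀ i, X i) := ⟨o⟩
    set n : ℕ := Fintype.card ι with hn
    have hn0 : 0 < (n : ℝ) := by
      have : 0 < n := Fintype.card_pos
      exact_mod_cast this
    have hne : (n : ℝ) ≠ 0 := ne_of_gt hn0
    have hn1 : (1 : ℝ) ≤ n := by
      have : 1 ≤ n := Fintype.card_pos
      exact_mod_cast this
    obtain ⟨z, _, hz⟩ := Finset.exists_max_image Finset.univ f Finset.univ_nonempty
    obtain ⟨δ, hδ, hδkey⟩ : ∃ δ : ℝ, 0 < δ ∧ ∀ y, f y < f z → f y ≤ f z - δ := by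
      by_cases hD : (Finset.univ.filter fun y => f y < f z).Nonempty
      · obtain ⟨w, hw, hwm⟩ := Finset.exists_max_image _ f hD
        have hwz : f w < f z := (Finset.mem_filter.1 hw).2
        refine ⟨f z - f w, by linarith, fun y hy => ?_⟩
        have := hwm y (Finset.mem_filter.2 ⟨Finset.mem_univ y, hy⟩)
        linarith
      · exact ⟨1, one_pos, fun y hy =>
          absurd (Finset.mem_filter.2 ⟨Finset.mem_univ y, hy⟩) fun h => hD ⟨y, h⟩⟩
    obtain ⟨xb, _, hPb'⟩ := Finset.exists_max_image Finset.univ (fun y => |Pot o f y|)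
      Finset.univ_nonempty
    set B : ℝ := |Pot o f xb| with hB
    have hBnn : 0 ≤ B := abs_nonneg _
    have hPb : ∀ y, |Pot o f y| ≤ B := fun y => hPb' y (Finset.mem_univ y)
    have hden : 0 < δ + n * (2 * B + 1) := by nlinarith
    refine ⟨δ / (δ + n * (2 * B + 1)), div_pos hδ hden, ?_, fun α h0 h1 => ?_⟩
    · rw [div_lt_one hden]; nlinarith
    · have hα1 : α < 1 := lt_of_le_of_lt h1 (by rw [div_lt_one hden]; nlinarith)
      have key : α * (n * (2 * B + 1)) ≤ (1 - α) * δ := by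
        rw [le_div_iff₀ hden] at h1
        nlinarith
      -- the (rescaled) exact potential
      set G : (∀ i, X i) → ℝ := fun y => α * Pot o f y * n + (1 - α) * f y with hG
      obtain ⟨xs, _, hxs'⟩ := Finset.exists_max_image Finset.univ G Finset.univ_nonempty
      have hxs : ∀ y, G y ≤ G xs := fun y => hxs' y (Finset.mem_univ y)
      -- xs maximizes f
      have hfxs : f xs = f z := by
        by_contra hne'
        have hlt : f xs < f z := lt_of_le_of_ne (hz xs (Finset.mem_univ xs)) hne'
        have hgap : f xs ≤ f z - δ := hδkey xs hlt
        have hGz := hxs z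
        simp only [hG] at hGz
        have e1 : (1 - α) * (f z - f xs) ≤ α * n * (Pot o f xs - Pot o f z) := by nlinarith
        have hP1 : Pot o f xs - Pot o f z ≤ 2 * B := by
          have b1 := abs_le.1 (hPb xs)
          have b2 := abs_le.1 (hPb z)
          linarith [b1.2, b2.1]
        have e2 : α * n * (Pot o f xs - Pot o f z) ≤ α * n * (2 * B) :=
          mul_le_mul_of_nonneg_left hP1 (mul_nonneg h0 hn0.le)
        have e3 : (1 - α) * δ ≤ (1 - α) * (f z - f xs) :=
          mul_le_mul_of_nonneg_left (by linarith) (by linarith)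
        have e4 : α * n ≤ 0 := by nlinarith
        have e5 : α = 0 := by
          by_contra hα
          have : 0 < α := lt_of_le_of_ne h0 (Ne.symm hα)
          nlinarith
        subst e5
        simp only [zero_mul, mul_zero] at e1 e2 e3
        linarith
      refine ⟨xs, ?_, ?_, ?_⟩
      · -- Nash equilibrium
        intro i y
        set x' := Function.update xs i y with hx'
        have hsh : Sh o f i xs - Sh o f i x' = Pot o f xs - Pot o f x' := by
          rw [Sh_eq_pot o xs f hf i, Sh_eq_pot o x' f hf i, hx', Function.update_idem]
          ring
        have hGle : G x' ≤ G xs := hxs x'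
        simp only [hG] at hGle
        rw [← sub_nonneg]
        have heq : ES α o f i xs - ES α o f i x'
            = (α * (Pot o f xs - Pot o f x') * n + (1 - α) * (f xs - f x')) / n := by
          simp only [ES, ← hn]
          field_simp
          linear_combination (α * (n : ℝ)) * hsh
        rw [heq]
        apply div_nonneg _ hn0.le
        linarith
      · -- optimality of f
        intro y
        rw [hfxs]
        exact hz y (Finset.mem_univ y)
      · -- Pareto efficiency
        rintro ⟨y, hyall, j, hyj⟩
        have hsum : ∀ w : ∀ i, X i, ∑ k, ES α o f k w = f w := by
          intro w
          simp only [ES, ← hn]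
          rw [Finset.sum_add_distrib, ← Finset.mul_sum, sh_efficiency o w f hf,
            Finset.sum_const, Finset.card_univ, ← hn, nsmul_eq_mul]
          field_simp
          ring
        have hlt : f xs < f y := by
          have := Finset.sum_lt_sum (fun k (_ : k ∈ Finset.univ) => hyall k)
            ⟨j, Finset.mem_univ j, hyj⟩
          rwa [hsum xs, hsum y] at this
        have : f y ≤ f xs := by rw [hfxs]; exact hz y (Finset.mem_univ y)
        linarith

end

/-- There is a threshold α₀ ∈ (0,1) such that for every α ∈ [0, α₀] the
egalitarian Shapley game has a pure strategy Nash equilibrium at which f attains its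
maximum, hence a Pareto-efficient equilibrium. -/
theorem stmt_10 {ι : Type*} [DecidableEq ι] [Fintype ι] {X : ι → Type*}
    [∀ i, Fintype (X i)] [∀ i, DecidableEq (X i)]
    (o : ∀ i, X i) (f : (∀ i, X i) → ℝ) (hf : f o = 0) :
    ∃ α₀ : ℝ, 0 < α₀ ∧ α₀ < 1 ∧ ∀ α : ℝ, 0 ≤ α → α ≤ α₀ →
      ∃ xs : ∀ i, X i,
        (∀ i : ι, ∀ y : X i, ES α o f i (Function.update xs i y) ≤ ES α o f i xs) ∧
        (∀ y : ∀ i, X i, f y ≤ f xs) ∧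
        ¬ ∃ y : ∀ i, X i, (∀ j : ι, ES α o f j xs ≤ ES α o f j y) ∧
          ∃ j : ι, ES α o f j xs < ES α o f j y := by
  exact stmt_10' o f hf
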